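/- Let P, Q, P′, Q′ be probability measures (P, Q on one measurable space and P′, Q′ on another, each pair absolutely continuous with respect to a common σ-finite measure). If H_α(P,Q) ≤ H_α(P′,Q′) for every α ≥ 0, then also H_α(Q,P) ≤ H_α(Q′,P′) for every α ≥ 0. -/
import Mathlib
open MeasureTheory

-- density of probability measure has integral 1
lemma int_density_one {X : Type*} [MeasurableSpace X] (μ : Measure X)
    (P : Measure X) [IsProbabilityMeasure P] (p : X → ℝ)
    (hp : Measurable p) (hp0 : ∀ x, 0 ≤ p x)
    (hP : P = μ.withDensity fun x => ENNReal.ofReal (p x)) :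
    ∫ x, p x ∂μ = 1 := by
  have h1 : ∫⁻ x, ENNReal.ofReal (p x) ∂μ = 1 := by
    have := measure_univ (μ := P)
    rwa [hP, withDensity_apply _ MeasurableSet.univ, setLIntegral_univ] at this
  rw [integral_eq_lintegral_of_nonneg_ae (Filter.Eventually.of_forall hp0)
    hp.aestronglyMeasurable, h1]
  simp

lemma int_density {X : Type*} [MeasurableSpace X] (μ : Measure X)
    (P : Measure X) [IsProbabilityMeasure P] (p : X → ℝ)
    (hp : Measurable p) (hp0 : ∀ x, 0 ≤ p x)
    (hP : P = μ.withDensity fun x => ENNReal.ofReal (p x)) :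
    Integrable p μ := by
  have h1 : ∫⁻ x, ENNReal.ofReal (p x) ∂μ = 1 := by
    have := measure_univ (μ := P)
    rwa [hP, withDensity_apply _ MeasurableSet.univ, setLIntegral_univ] at this
  refine ⟨hp.aestronglyMeasurable, ?_⟩
  rw [hasFiniteIntegral_iff_norm]
  have : ∀ x, ENNReal.ofReal ‖p x‖ = ENNReal.ofReal (p x) := fun x => by
    rw [Real.norm_eq_abs, abs_of_nonneg (hp0 x)]
  simp_rw [this, h1]
  exact ENNReal.one_lt_top

lemma int_max {X : Type*} [MeasurableSpace X] (μ : Measure X)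
    (p q : X → ℝ) (hp : Measurable p) (hq : Measurable q)
    (hp0 : ∀ x, 0 ≤ p x) (hq0 : ∀ x, 0 ≤ q x)
    (hip : Integrable p μ) (β : ℝ) (hβ : 0 ≤ β) :
    Integrable (fun x => max (p x - β * q x) 0) μ := by
  refine hip.mono ((hp.sub (measurable_const.mul hq)).max measurable_const).aestronglyMeasurable
    (Filter.Eventually.of_forall fun x => ?_)
  rw [Real.norm_eq_abs, Real.norm_eq_abs, abs_of_nonneg (le_max_right _ _),
    abs_of_nonneg (hp0 x)]
  rcases le_or_gt (p x - β * q x) 0 with h | h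
  · rw [max_eq_right h]; exact hp0 x
  · rw [max_eq_left h.le]
    nlinarith [hq0 x]

lemma key_identity {X : Type*} [MeasurableSpace X] (μ : Measure X)
    (p q : X → ℝ) (hp : Measurable p) (hq : Measurable q)
    (hp0 : ∀ x, 0 ≤ p x) (hq0 : ∀ x, 0 ≤ q x)
    (hip : Integrable p μ) (hiq : Integrable q μ) (α : ℝ) (hα : 0 < α) :
    ∫ x, max (q x - α * p x) 0 ∂μ =
      (∫ x, q x ∂μ) - α * (∫ x, p x ∂μ) + α * ∫ x, max (p x - α⁻¹ * q x) 0 ∂μ := by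
  have hpt : ∀ x, max (q x - α * p x) 0 =
      (q x - α * p x) + α * max (p x - α⁻¹ * q x) 0 := by
    intro x
    have : α * max (p x - α⁻¹ * q x) 0 = max (α * p x - q x) 0 := by
      rw [mul_max_of_nonneg _ _ hα.le, mul_zero, mul_sub, mul_inv_cancel_left₀ hα.ne']
    rw [this]
    rcases le_total (q x - α * p x) 0 with h | h
    · rw [max_eq_right h, max_eq_left (by linarith)]; ring
    · rw [max_eq_left h, max_eq_right (by linarith)]; ring
  simp_rw [hpt]
  have h1 : Integrable (fun x => q x - α * p x) μ := hiq.sub (hip.const_mul α)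
  have h2 : Integrable (fun x => max (p x - α⁻¹ * q x) 0) μ :=
    int_max μ p q hp hq hp0 hq0 hip α⁻¹ (by positivity)
  rw [integral_add h1 (h2.const_mul α), integral_sub hiq (hip.const_mul α),
    integral_const_mul, integral_const_mul]

theorem hockeyStick_dominates_swap
    {X Y : Type*} [MeasurableSpace X] [MeasurableSpace Y]
    (μ : Measure X) (ν : Measure Y) [SigmaFinite μ] [SigmaFinite ν]
    (P Q : Measure X) (P' Q' : Measure Y)
    [IsProbabilityMeasure P] [IsProbabilityMeasure Q]
    [IsProbabilityMeasure P'] [IsProbabilityMeasure Q']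
    (p q : X → ℝ) (p' q' : Y → ℝ)
    (hp : Measurable p) (hq : Measurable q) (hp' : Measurable p') (hq' : Measurable q')
    (hp0 : ∀ x, 0 ≤ p x) (hq0 : ∀ x, 0 ≤ q x)
    (hp0' : ∀ y, 0 ≤ p' y) (hq0' : ∀ y, 0 ≤ q' y)
    (hP : P = μ.withDensity fun x => ENNReal.ofReal (p x))
    (hQ : Q = μ.withDensity fun x => ENNReal.ofReal (q x))
    (hP' : P' = ν.withDensity fun y => ENNReal.ofReal (p' y))
    (hQ' : Q' = ν.withDensity fun y => ENNReal.ofReal (q' y))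
    (hdom : ∀ α : ℝ, 0 ≤ α →
      (∫ x, max (p x - α * q x) 0 ∂μ) ≤ ∫ y, max (p' y - α * q' y) 0 ∂ν) :
    ∀ α : ℝ, 0 ≤ α →
      (∫ x, max (q x - α * p x) 0 ∂μ) ≤ ∫ y, max (q' y - α * p' y) 0 ∂ν := by
  intro α hα
  have hip := int_density μ P p hp hp0 hP
  have hiq := int_density μ Q q hq hq0 hQ
  have hip' := int_density ν P' p' hp' hp0' hP'
  have hiq' := int_density ν Q' q' hq' hq0' hQ'
  have hIp := int_density_one μ P p hp hp0 hP
  have hIq := int_density_one μ Q q hq hq0 hQ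
  have hIp' := int_density_one ν P' p' hp' hp0' hP'
  have hIq' := int_density_one ν Q' q' hq' hq0' hQ'
  rcases eq_or_lt_of_le hα with rfl | hα'
  · simp_rw [zero_mul, sub_zero]
    have h1 : ∀ x, max (q x) 0 = q x := fun x => max_eq_left (hq0 x)
    have h2 : ∀ y, max (q' y) 0 = q' y := fun y => max_eq_left (hq0' y)
    simp_rw [h1, h2, hIq, hIq']; exact le_rfl
  · rw [key_identity μ p q hp hq hp0 hq0 hip hiq α hα',
      key_identity ν p' q' hp' hq' hp0' hq0' hip' hiq' α hα',
      hIp, hIq, hIp', hIq']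
    have := hdom α⁻¹ (by positivity)
    nlinarith
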